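/- arXiv:1103.3889 — 2 statements merged into one kernel-verified Lean document; each statement's English description precedes it below -/
import Mathlib

section
/- Let ν, λ₁, C > 0 and let z : ℝ → ℝ₊ be continuous such that there exist ρ > 0 with z(t) ≤ ρ(1 + |t|^{1/2}) for all t ∈ ℝ, and t₀ ≥ 0 such that ∫_{-t}^{-t₀} (-νλ₁ + (3C²/ν) z(s)²) ds ≤ -(νλ₁/2)(t - t₀) for all t ≥ t₀. Then ∫_{-∞}^0 (1 + z(t)² + z(t)⁴) · exp(νλ₁ t + (3C²/ν)∫_t^0 z(s)² ds) dt < ∞. -/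
open Filter Topology MeasureTheory intervalIntegral

set_option maxHeartbeats 1000000

lemma integrableOn_exp_mul_Iic' {δ b : ℝ} (hδ : 0 < δ) :
    IntegrableOn (fun t => Real.exp (δ * t)) (Set.Iic b) := by
  have h1 : Integrable ((Set.Iic (δ * b)).indicator Real.exp) :=
    (integrableOn_exp_Iic (δ * b)).integrable_indicator measurableSet_Iic
  have h2 := h1.comp_mul_left' hδ.ne'
  refine (h2.integrableOn).congr_fun ?_ measurableSet_Iic
  intro t ht
  simp [Set.indicator_of_mem, Set.mem_Iic.mpr (mul_le_mul_of_nonneg_left ht hδ.le)]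

/-- Lemma 8.6. Under sublinear growth `z(t) ≤ ρ(1+|t|^{1/2})` and the
ergodic-type estimate `∫_{-t}^{-t₀}(-νλ₁ + (3C²/ν)z(s)²) ds ≤ -(νλ₁/2)(t-t₀)` for
`t ≥ t₀`, the function `(1 + z² + z⁴)·exp(νλ₁ t + (3C²/ν)∫_t^0 z(s)² ds)` is integrable
on `(-∞, 0]`. -/
theorem stmt_8 (ν lam C : ℝ) (hν : 0 < ν) (hlam : 0 < lam) (hC : 0 < C)
    (z : ℝ → ℝ) (hz : Continuous z) (hz0 : ∀ t, 0 ≤ z t)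
    (ρ : ℝ) (hρ : 0 < ρ) (hsub : ∀ t : ℝ, z t ≤ ρ * (1 + |t| ^ ((1:ℝ)/2)))
    (t₀ : ℝ) (ht₀ : 0 ≤ t₀)
    (herg : ∀ t ≥ t₀, ∫ s in (-t)..(-t₀), (-(ν * lam) + (3 * C ^ 2 / ν) * (z s) ^ 2)
      ≤ -(ν * lam / 2) * (t - t₀)) :
    IntegrableOn
      (fun t => (1 + (z t) ^ 2 + (z t) ^ 4) *
        Real.exp (ν * lam * t + (3 * C ^ 2 / ν) * ∫ s in t..(0:ℝ), (z s) ^ 2))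
      (Set.Iic (0:ℝ)) := by
  set c3 : ℝ := 3 * C ^ 2 / ν with hc3def
  have hc3 : 0 ≤ c3 := by positivity
  set f : ℝ → ℝ := fun t => (1 + (z t) ^ 2 + (z t) ^ 4) *
      Real.exp (ν * lam * t + c3 * ∫ s in t..(0:ℝ), (z s) ^ 2) with hfdef
  have hzsq : Continuous fun s => (z s) ^ 2 := hz.pow 2
  have hzint : ∀ a b : ℝ, IntervalIntegrable (fun s => (z s) ^ 2) volume a b :=
    fun a b => hzsq.intervalIntegrable a b
  -- continuity of the integrand
  have hFcont : Continuous fun t => ∫ s in t..(0:ℝ), (z s) ^ 2 := by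
    have h := (intervalIntegral.continuous_primitive hzint 0).neg
    have heq : (fun t => ∫ s in t..(0:ℝ), (z s) ^ 2)
        = fun t => -∫ s in (0:ℝ)..t, (z s) ^ 2 :=
      funext fun t => intervalIntegral.integral_symm 0 t
    rw [heq]; exact h
  have hfcont : Continuous f := by
    apply Continuous.mul
    · continuity
    · exact (((continuous_const.mul continuous_id).add
        (continuous_const.mul hFcont)).rexp)
  have hfnonneg : ∀ t, 0 ≤ f t := by
    intro t
    have h1 : 0 ≤ 1 + (z t) ^ 2 + (z t) ^ 4 := by positivity
    exact mul_nonneg h1 (Real.exp_pos _).le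
  -- integrable on the compact piece
  have h1 : IntegrableOn f (Set.Icc (-t₀) 0) :=
    hfcont.continuousOn.integrableOn_compact isCompact_Icc
  -- exponent bound on the tail
  set K₀ : ℝ := c3 * ∫ s in (-t₀)..(0:ℝ), (z s) ^ 2 with hK0def
  have hEbound : ∀ t ≤ -t₀,
      ν * lam * t + c3 * (∫ s in t..(0:ℝ), (z s) ^ 2) ≤ ν * lam / 2 * t + K₀ := by
    intro t ht
    have hTt : t₀ ≤ -t := by linarith
    have hherg := herg (-t) hTt
    rw [neg_neg] at hherg
    have hsplit : (∫ s in t..(0:ℝ), (z s) ^ 2)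
        = (∫ s in t..(-t₀), (z s) ^ 2) + ∫ s in (-t₀)..(0:ℝ), (z s) ^ 2 :=
      (intervalIntegral.integral_add_adjacent_intervals (hzint _ _) (hzint _ _)).symm
    have hadd : (∫ s in t..(-t₀), (-(ν * lam) + c3 * (z s) ^ 2))
        = -(ν * lam) * ((-t₀) - t) + c3 * ∫ s in t..(-t₀), (z s) ^ 2 := by
      rw [intervalIntegral.integral_add (intervalIntegrable_const) ((hzint _ _).const_mul c3),
        intervalIntegral.integral_const, intervalIntegral.integral_const_mul]
      simp only [smul_eq_mul]
      ring
    rw [hadd] at hherg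
    have hkey : c3 * (∫ s in t..(-t₀), (z s) ^ 2) ≤ -(ν * lam / 2) * t := by
      nlinarith [mul_pos hν hlam, mul_nonneg (mul_pos hν hlam).le ht₀]
    rw [hsplit]
    calc ν * lam * t + c3 * ((∫ s in t..(-t₀), (z s) ^ 2) + ∫ s in (-t₀)..(0:ℝ), (z s) ^ 2)
        = ν * lam * t + c3 * (∫ s in t..(-t₀), (z s) ^ 2) + K₀ := by ring
      _ ≤ ν * lam * t + -(ν * lam / 2) * t + K₀ := by linarith
      _ = ν * lam / 2 * t + K₀ := by ring
  -- polynomial bound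
  set δ : ℝ := ν * lam / 4 with hδdef
  have hδ : 0 < δ := by positivity
  set a : ℝ := max 1 (2 / δ) with hadef
  have ha1 : 1 ≤ a := le_max_left _ _
  have ha2 : 2 / δ ≤ a := le_max_right _ _
  set M₀ : ℝ := (1 + 2 * ρ ^ 2 + 4 * ρ ^ 4) * a ^ 2 with hM0def
  have hpoly : ∀ t : ℝ, 1 + (z t) ^ 2 + (z t) ^ 4 ≤ M₀ * Real.exp (δ * |t|) := by
    intro t
    set u : ℝ := |t| ^ ((1:ℝ)/2) with hudef
    have hu0 : 0 ≤ u := Real.rpow_nonneg (abs_nonneg t) _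
    have hu2 : u ^ 2 = |t| := by
      rw [hudef, ← Real.rpow_natCast (|t| ^ ((1:ℝ)/2)) 2, ← Real.rpow_mul (abs_nonneg t)]
      norm_num
    have hzt : z t ≤ ρ * (1 + u) := hsub t
    have hz2 : (z t) ^ 2 ≤ ρ ^ 2 * (1 + u) ^ 2 := by
      have := pow_le_pow_left₀ (hz0 t) hzt 2
      calc (z t) ^ 2 ≤ (ρ * (1 + u)) ^ 2 := this
        _ = ρ ^ 2 * (1 + u) ^ 2 := by ring
    have h1u : (1 + u) ^ 2 ≤ 2 * (1 + |t|) := by nlinarith [sq_nonneg (1 - u)]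
    have hz2' : (z t) ^ 2 ≤ 2 * ρ ^ 2 * (1 + |t|) := by nlinarith [sq_nonneg ρ]
    have hz4 : (z t) ^ 4 ≤ 4 * ρ ^ 4 * (1 + |t|) ^ 2 := by
      have h := pow_le_pow_left₀ (sq_nonneg (z t)) hz2' 2
      calc (z t) ^ 4 = ((z t) ^ 2) ^ 2 := by ring
        _ ≤ (2 * ρ ^ 2 * (1 + |t|)) ^ 2 := h
        _ = 4 * ρ ^ 4 * (1 + |t|) ^ 2 := by ring
    have hlin : 1 + |t| ≤ a * (1 + δ * |t| / 2) := by
      have h2 : 1 ≤ a * (δ / 2) := by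
        rw [div_le_iff₀ hδ] at ha2
        nlinarith
      have h3 : |t| ≤ a * (δ / 2) * |t| := le_mul_of_one_le_left (abs_nonneg t) h2
      calc 1 + |t| ≤ a + a * (δ / 2) * |t| := add_le_add ha1 h3
        _ = a * (1 + δ * |t| / 2) := by ring
    have hexp : (1 + δ * |t| / 2) ^ 2 ≤ Real.exp (δ * |t|) := by
      have h1 : 1 + δ * |t| / 2 ≤ Real.exp (δ * |t| / 2) := by
        have := Real.add_one_le_exp (δ * |t| / 2); linarith
      have h0 : 0 ≤ 1 + δ * |t| / 2 := by positivity
      calc (1 + δ * |t| / 2) ^ 2 ≤ Real.exp (δ * |t| / 2) ^ 2 := pow_le_pow_left₀ h0 h1 2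
        _ = Real.exp (δ * |t|) := by rw [← Real.exp_nat_mul]; ring_nf
    have hsq : (1 + |t|) ^ 2 ≤ a ^ 2 * Real.exp (δ * |t|) := by
      have h0 : 0 ≤ 1 + |t| := by positivity
      calc (1 + |t|) ^ 2 ≤ (a * (1 + δ * |t| / 2)) ^ 2 := pow_le_pow_left₀ h0 hlin 2
        _ = a ^ 2 * (1 + δ * |t| / 2) ^ 2 := by ring
        _ ≤ a ^ 2 * Real.exp (δ * |t|) := by nlinarith [sq_nonneg a]
    have hone : (1:ℝ) ≤ (1 + |t|) ^ 2 := by nlinarith [abs_nonneg t]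
    have hlin2 : 1 + |t| ≤ (1 + |t|) ^ 2 := by nlinarith [abs_nonneg t]
    calc 1 + (z t) ^ 2 + (z t) ^ 4
        ≤ (1 + |t|) ^ 2 + 2 * ρ ^ 2 * (1 + |t|) ^ 2 + 4 * ρ ^ 4 * (1 + |t|) ^ 2 := by nlinarith [sq_nonneg ρ]
      _ = (1 + 2 * ρ ^ 2 + 4 * ρ ^ 4) * (1 + |t|) ^ 2 := by ring
      _ ≤ M₀ * Real.exp (δ * |t|) := by
          rw [hM0def]
          have hM0pos : 0 < 1 + 2 * ρ ^ 2 + 4 * ρ ^ 4 := by positivity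
          nlinarith [hsq, hM0pos]
  -- tail integrability
  have h2 : IntegrableOn f (Set.Iic (-t₀)) := by
    set M : ℝ := M₀ * Real.exp K₀ with hMdef
    have hg : IntegrableOn (fun t => M * Real.exp (δ * t)) (Set.Iic (-t₀)) :=
      (integrableOn_exp_mul_Iic' hδ).const_mul M
    refine Integrable.mono' hg (hfcont.aestronglyMeasurable.restrict) ?_
    rw [ae_restrict_iff' measurableSet_Iic]
    refine Filter.Eventually.of_forall (fun t ht => ?_)
    have ht' : t ≤ -t₀ := ht
    have ht0 : t ≤ 0 := le_trans ht' (by linarith)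
    have habs : |t| = -t := abs_of_nonpos ht0
    rw [Real.norm_eq_abs, abs_of_nonneg (hfnonneg t)]
    have hE := hEbound t ht'
    have hP := hpoly t
    rw [habs] at hP
    have hPnn : 0 ≤ 1 + (z t) ^ 2 + (z t) ^ 4 := by positivity
    calc f t ≤ (M₀ * Real.exp (δ * (-t))) *
          Real.exp (ν * lam * t + c3 * ∫ s in t..(0:ℝ), (z s) ^ 2) := by
          exact mul_le_mul_of_nonneg_right hP (Real.exp_pos _).le
      _ ≤ (M₀ * Real.exp (δ * (-t))) * Real.exp (ν * lam / 2 * t + K₀) := by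
          have hM₀nn : 0 ≤ M₀ * Real.exp (δ * (-t)) := by
            have : (0:ℝ) < 1 + 2 * ρ ^ 2 + 4 * ρ ^ 4 := by positivity
            have haa : (0:ℝ) < a := lt_of_lt_of_le one_pos ha1
            positivity
          exact mul_le_mul_of_nonneg_left (Real.exp_le_exp.mpr hE) hM₀nn
      _ = M * Real.exp (δ * t) := by
          have hee : Real.exp (δ * -t) * Real.exp (ν * lam / 2 * t + K₀)
              = Real.exp K₀ * Real.exp (δ * t) := by
            rw [← Real.exp_add, ← Real.exp_add]
            congr 1
            rw [hδdef]; ring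
          calc M₀ * Real.exp (δ * -t) * Real.exp (ν * lam / 2 * t + K₀)
              = M₀ * (Real.exp (δ * -t) * Real.exp (ν * lam / 2 * t + K₀)) := by ring
            _ = M₀ * (Real.exp K₀ * Real.exp (δ * t)) := by rw [hee]
            _ = M * Real.exp (δ * t) := by rw [hMdef]; ring
  have hsub' : Set.Iic (0:ℝ) ⊆ Set.Iic (-t₀) ∪ Set.Icc (-t₀) 0 := by
    intro x hx
    rcases le_or_gt x (-t₀) with h | h
    · exact Or.inl h
    · exact Or.inr ⟨h.le, hx⟩
  exact (h2.union h1).mono_set hsub'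
end

section
/- Let ν, λ₁, C > 0 and z : ℝ → ℝ₊ continuous with z(t) ≤ ρ(1+|t|^{1/2}) and satisfying ∫_{-t}^{-t₀}(-νλ₁ + (3C²/ν) z(s)²) ds ≤ -(νλ₁/2)(t-t₀) for t ≥ t₀. Then lim_{t→-∞} z(t)² · exp(νλ₁ t + (3C²/ν) ∫_t^0 z(s)² ds) = 0. -/
open Filter Topology MeasureTheory intervalIntegral

/-- Auxiliary: polynomial growth times decaying exponential tends to 0 at `atTop`. -/
lemma aux_tendsto_poly_exp {a : ℝ} (ha : 0 < a) :
    Tendsto (fun u : ℝ => (1 + |u| ^ ((1:ℝ)/2)) ^ 2 * Real.exp (-(a * u))) atTop (𝓝 0) := by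
  have hmain : Tendsto (fun u : ℝ => 4 * (u ^ (1:ℝ) * Real.exp (-a * u))) atTop (𝓝 0) := by
    have := (tendsto_rpow_mul_exp_neg_mul_atTop_nhds_zero 1 a ha).const_mul (4:ℝ)
    simpa using this
  refine tendsto_of_tendsto_of_tendsto_of_le_of_le' tendsto_const_nhds hmain
    (Eventually.of_forall fun u => by positivity) ?_
  filter_upwards [eventually_ge_atTop (1:ℝ)] with u hu
  have hu0 : (0:ℝ) ≤ u := by linarith
  have habs : |u| = u := abs_of_nonneg hu0
  have h12 : (1:ℝ) ≤ u ^ ((1:ℝ)/2) := Real.one_le_rpow hu (by norm_num)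
  have hsq : (u ^ ((1:ℝ)/2)) ^ 2 = u := by
    rw [← Real.rpow_natCast (u ^ ((1:ℝ)/2)) 2, ← Real.rpow_mul hu0]
    norm_num
  have hpoly : (1 + |u| ^ ((1:ℝ)/2)) ^ 2 ≤ 4 * u ^ (1:ℝ) := by
    rw [habs, Real.rpow_one]
    nlinarith [hsq, h12]
  have hexp : (0:ℝ) < Real.exp (-(a * u)) := Real.exp_pos _
  calc (1 + |u| ^ ((1:ℝ)/2)) ^ 2 * Real.exp (-(a * u))
      ≤ (4 * u ^ (1:ℝ)) * Real.exp (-(a * u)) := by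
        exact mul_le_mul_of_nonneg_right hpoly hexp.le
    _ = 4 * (u ^ (1:ℝ) * Real.exp (-a * u)) := by ring_nf

/-- Lemma 8.5. Under sublinear growth of `z` and the ergodic-type
estimate, `z(t)²·exp(νλ₁ t + (3C²/ν)∫_t^0 z(s)² ds) → 0` as `t → -∞`. -/
theorem stmt_9 (ν lam C : ℝ) (hν : 0 < ν) (hlam : 0 < lam) (hC : 0 < C)
    (z : ℝ → ℝ) (hz : Continuous z) (hz0 : ∀ t, 0 ≤ z t)
    (ρ : ℝ) (hρ : 0 < ρ) (hsub : ∀ t : ℝ, z t ≤ ρ * (1 + |t| ^ ((1:ℝ)/2)))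
    (t₀ : ℝ) (ht₀ : 0 ≤ t₀)
    (herg : ∀ t ≥ t₀, ∫ s in (-t)..(-t₀), (-(ν * lam) + (3 * C ^ 2 / ν) * (z s) ^ 2)
      ≤ -(ν * lam / 2) * (t - t₀)) :
    Tendsto
      (fun t => (z t) ^ 2 *
        Real.exp (ν * lam * t + (3 * C ^ 2 / ν) * ∫ s in t..(0:ℝ), (z s) ^ 2))
      atBot (𝓝 0) := by
  set K := 3 * C ^ 2 / ν with hK
  set a := ν * lam / 2 with ha
  have ha0 : 0 < a := by positivity
  have hzi : ∀ p q : ℝ, IntervalIntegrable (fun s => (z s) ^ 2) volume p q :=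
    fun p q => (hz.pow 2).intervalIntegrable p q
  set B := K * ∫ s in (-t₀)..(0:ℝ), (z s) ^ 2 with hB
  -- bound on the exponent for t ≤ -t₀
  have hexp : ∀ t ≤ -t₀, ν * lam * t + K * ∫ s in t..(0:ℝ), (z s) ^ 2 ≤ a * t + B := by
    intro t ht
    have hu : -t ≥ t₀ := by linarith
    have h1 := herg (-t) hu
    rw [neg_neg] at h1
    have hsplit : (∫ s in t..(0:ℝ), (z s) ^ 2)
        = (∫ s in t..(-t₀), (z s) ^ 2) + ∫ s in (-t₀)..(0:ℝ), (z s) ^ 2 :=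
      (intervalIntegral.integral_add_adjacent_intervals (hzi _ _) (hzi _ _)).symm
    have h2 : (∫ s in t..(-t₀), (-(ν * lam) + K * (z s) ^ 2))
        = (-t₀ - t) * (-(ν * lam)) + K * ∫ s in t..(-t₀), (z s) ^ 2 := by
      rw [intervalIntegral.integral_add intervalIntegrable_const ((hzi _ _).const_mul K),
        intervalIntegral.integral_const, intervalIntegral.integral_const_mul]
      simp [smul_eq_mul]
    rw [h2] at h1
    rw [hsplit]
    have hnl : ν * lam = 2 * a := by rw [ha]; ring
    nlinarith [h1]
  -- squeeze
  have hupper : Tendsto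
      (fun t : ℝ => ρ ^ 2 * (1 + |t| ^ ((1:ℝ)/2)) ^ 2 * Real.exp (a * t + B))
      atBot (𝓝 0) := by
    have hcomp : Tendsto
        (fun t : ℝ => (1 + |(-t)| ^ ((1:ℝ)/2)) ^ 2 * Real.exp (-(a * (-t))))
        atBot (𝓝 0) := (aux_tendsto_poly_exp ha0).comp tendsto_neg_atBot_atTop
    have hcomp' : Tendsto
        (fun t : ℝ => (1 + |t| ^ ((1:ℝ)/2)) ^ 2 * Real.exp (a * t)) atBot (𝓝 0) :=
      hcomp.congr fun t => by rw [abs_neg]; ring_nf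
    have := hcomp'.const_mul (ρ ^ 2 * Real.exp B)
    rw [mul_zero] at this
    convert this using 2 with t
    rw [Real.exp_add]
    ring
  refine tendsto_of_tendsto_of_tendsto_of_le_of_le' tendsto_const_nhds hupper
    (Eventually.of_forall fun t => by positivity) ?_
  filter_upwards [eventually_le_atBot (-t₀)] with t ht
  have hE := hexp t ht
  have hzb : z t ^ 2 ≤ ρ ^ 2 * (1 + |t| ^ ((1:ℝ)/2)) ^ 2 := by
    have h1 := hsub t
    have h2 := hz0 t
    have h3 : (0:ℝ) ≤ |t| ^ ((1:ℝ)/2) := Real.rpow_nonneg (abs_nonneg t) _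
    nlinarith
  calc z t ^ 2 * Real.exp (ν * lam * t + K * ∫ s in t..(0:ℝ), (z s) ^ 2)
      ≤ (ρ ^ 2 * (1 + |t| ^ ((1:ℝ)/2)) ^ 2) * Real.exp (a * t + B) := by
        apply mul_le_mul hzb (Real.exp_le_exp.mpr hE) (Real.exp_pos _).le
        positivity
    _ = ρ ^ 2 * (1 + |t| ^ ((1:ℝ)/2)) ^ 2 * Real.exp (a * t + B) := by ring
end
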